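/- arXiv:2104.09665 — 3 statements merged into one kernel-verified Lean document; each statement's English description precedes it below -/
import Mathlib

section
/- Let f and g be homogeneous polynomials in d variables of degrees m₁ and m₂ respectively. Then the Euclidean (L²) norm of the coefficient vector of the product fg satisfies ‖v(fg)‖ ≤ ‖v(f)‖·‖v(g)‖, where v(p) denotes the vector obtained by flattening the unique symmetric coefficient tensor T(p) satisfying ⟨T(p), X^{⊗deg p}⟩ = p(X). -/
open MvPolynomial

/-- The exponent (monomial) associated to an index tuple `w : Fin k → Fin d`. -/
noncomputable def expOf {d k : ℕ} (w : Fin k → Fin d) : Fin d →₀ ℕ := ∑ i, Finsupp.single (w i) 1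

/-- The number of index tuples giving the same monomial as `w`. -/
noncomputable def countOf {d k : ℕ} (w : Fin k → Fin d) : ℕ :=
  Nat.card {w' : Fin k → Fin d // expOf w' = expOf w}

/-- Entry of the flattened symmetric coefficient tensor of a homogeneous degree-`k`
polynomial `f`: the coefficient of the corresponding monomial divided evenly among
all index tuples producing it.  This is the unique symmetric tensor `T(f)` with
`⟨T(f), X^{⊗k}⟩ = f(X)`, flattened into a vector indexed by `Fin k → Fin d`. -/
noncomputable def coeffVecEntry {d : ℕ} (k : ℕ) (f : MvPolynomial (Fin d) ℝ)
    (w : Fin k → Fin d) : ℝ :=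
  f.coeff (expOf w) / (countOf w)

/-- Euclidean norm `‖v(f)‖` of the flattened symmetric coefficient tensor of `f`,
viewed as a homogeneous polynomial of degree `k`. -/
noncomputable def vnorm {d : ℕ} (k : ℕ) (f : MvPolynomial (Fin d) ℝ) : ℝ :=
  Real.sqrt (∑ w : Fin k → Fin d, (coeffVecEntry k f w)^2)

open Finset

lemma expOf_class_card {d k : ℕ} (w : Fin k → Fin d) :
    countOf w = (univ.filter (fun w' : Fin k → Fin d => expOf w' = expOf w)).card := by
  rw [countOf, Nat.card_eq_fintype_card, Fintype.card_subtype]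

lemma countOf_pos {d k : ℕ} (w : Fin k → Fin d) : 0 < countOf w := by
  have : Nonempty {w' : Fin k → Fin d // expOf w' = expOf w} := ⟨⟨w, rfl⟩⟩
  exact Nat.card_pos

lemma countOf_congr {d k : ℕ} {w w' : Fin k → Fin d} (h : expOf w' = expOf w) :
    countOf w' = countOf w := by
  simp only [countOf, h]

lemma degree_single' {d : ℕ} (i : Fin d) (n : ℕ) : (Finsupp.single i n).degree = n := by
  classical
  rcases eq_or_ne n 0 with rfl | h
  · simp [Finsupp.degree]
  · rw [Finsupp.degree_apply, Finsupp.support_single_ne_zero _ h, Finset.sum_singleton,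
      Finsupp.single_eq_same]

lemma degree_add' {d : ℕ} (a b : Fin d →₀ ℕ) : (a + b).degree = a.degree + b.degree := by
  simp [Finsupp.degree_eq_weight_one, map_add]

lemma exists_expOf {d : ℕ} : ∀ {m : ℕ} (β : Fin d →₀ ℕ), β.degree = m →
    ∃ u : Fin m → Fin d, expOf u = β := by
  intro m
  induction m with
  | zero =>
    intro β hβ
    refine ⟨Fin.elim0, ?_⟩
    rw [(Finsupp.degree_eq_zero_iff β).mp hβ]
    simp [expOf]
  | succ n ih =>
    intro β hβ
    obtain ⟨i, hi⟩ : ∃ i, β i ≠ 0 := by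
      by_contra h
      push_neg at h
      have : β = 0 := Finsupp.ext h
      rw [this] at hβ
      simp at hβ
    have hle : 1 ≤ β i := Nat.one_le_iff_ne_zero.mpr hi
    set β' := β - Finsupp.single i 1 with hβ'
    have hsplit : β = Finsupp.single i 1 + β' := by
      ext j
      rcases eq_or_ne j i with rfl | hj
      · simp [β', Finsupp.single_apply, Nat.add_sub_cancel' hle]
      · simp [β', Finsupp.single_apply, Ne.symm hj]
    have hdeg : β'.degree = n := by
      have := degree_add' (Finsupp.single i 1) β'
      rw [← hsplit, hβ, degree_single'] at this
      omega
    obtain ⟨u', hu'⟩ := ih β' hdeg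
    refine ⟨Fin.cons i u', ?_⟩
    rw [expOf, Fin.sum_univ_succ]
    simp only [Fin.cons_zero, Fin.cons_succ]
    rw [hsplit, ← hu']
    rfl

lemma sum_class {d m : ℕ} {f : MvPolynomial (Fin d) ℝ} (hf : f.IsHomogeneous m)
    (β : Fin d →₀ ℕ) :
    ∑ u ∈ univ.filter (fun u : Fin m → Fin d => expOf u = β), coeffVecEntry m f u
      = f.coeff β := by
  classical
  set s := univ.filter (fun u : Fin m → Fin d => expOf u = β) with hs
  rcases s.eq_empty_or_nonempty with he | hne
  · rw [he, Finset.sum_empty]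
    symm
    apply hf.coeff_eq_zero
    intro hdeg
    obtain ⟨u, hu⟩ := exists_expOf β hdeg
    have : u ∈ s := by simp [hs, hu]
    rw [he] at this
    exact absurd this (Finset.notMem_empty u)
  · have hcard : ∀ u ∈ s, coeffVecEntry m f u = f.coeff β / s.card := by
      intro u hu
      obtain ⟨-, hu⟩ := Finset.mem_filter.mp hu
      rw [coeffVecEntry, hu, expOf_class_card u]
      have : filter (fun w' : Fin m → Fin d => expOf w' = expOf u) univ = s := by
        rw [hs, hu]
      rw [this]
    rw [Finset.sum_congr rfl hcard, Finset.sum_const, nsmul_eq_mul]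
    have h0 : (s.card : ℝ) ≠ 0 := by
      exact_mod_cast Finset.card_ne_zero_of_mem hne.choose_spec
    field_simp

lemma expOf_split {d m₁ m₂ : ℕ} (w : Fin (m₁ + m₂) → Fin d) :
    expOf (w ∘ Fin.castAdd m₂) + expOf (w ∘ Fin.natAdd m₁) = expOf w := by
  simp only [expOf, Function.comp_apply]
  rw [Fin.sum_univ_add]

lemma coeff_mul_class {d m₁ m₂ : ℕ} {f g : MvPolynomial (Fin d) ℝ}
    (hf : f.IsHomogeneous m₁) (hg : g.IsHomogeneous m₂) (α : Fin d →₀ ℕ) :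
    ∑ p ∈ univ.filter
        (fun p : (Fin m₁ → Fin d) × (Fin m₂ → Fin d) => expOf p.1 + expOf p.2 = α),
      coeffVecEntry m₁ f p.1 * coeffVecEntry m₂ g p.2 = (f * g).coeff α := by
  classical
  rw [MvPolynomial.coeff_mul]
  rw [← Finset.sum_fiberwise_of_maps_to (g := fun p : (Fin m₁ → Fin d) × (Fin m₂ → Fin d) =>
      (expOf p.1, expOf p.2)) (t := Finset.HasAntidiagonal.antidiagonal α)
      (fun p hp => Finset.HasAntidiagonal.mem_antidiagonal.mpr (Finset.mem_filter.mp hp).2)]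
  apply Finset.sum_congr rfl
  intro q hq
  have hq' : q.1 + q.2 = α := Finset.HasAntidiagonal.mem_antidiagonal.mp hq
  rw [Finset.filter_filter]
  have hfe : (univ.filter fun p : (Fin m₁ → Fin d) × (Fin m₂ → Fin d) =>
        (expOf p.1 + expOf p.2 = α) ∧ (expOf p.1, expOf p.2) = q)
      = univ.filter fun p => expOf p.1 = q.1 ∧ expOf p.2 = q.2 := by
    apply Finset.filter_congr
    intro p _
    simp only [Prod.ext_iff]
    constructor
    · rintro ⟨-, h1, h2⟩; exact ⟨h1, h2⟩
    · rintro ⟨h1, h2⟩; rw [h1, h2]; exact ⟨hq', rfl, rfl⟩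
  have hprod : (univ.filter fun p : (Fin m₁ → Fin d) × (Fin m₂ → Fin d) =>
        expOf p.1 = q.1 ∧ expOf p.2 = q.2)
      = (univ.filter fun u : Fin m₁ → Fin d => expOf u = q.1) ×ˢ
        (univ.filter fun v : Fin m₂ → Fin d => expOf v = q.2) := by
    ext p
    simp [Finset.mem_product]
  rw [hfe, hprod, Finset.sum_product, ← Finset.sum_mul_sum, sum_class hf, sum_class hg]

lemma comp_castAdd_append {d m₁ m₂ : ℕ} (p : (Fin m₁ → Fin d) × (Fin m₂ → Fin d)) :
    Fin.append p.1 p.2 ∘ Fin.castAdd m₂ = p.1 := by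
  funext i; simp [Fin.append_left]

lemma comp_natAdd_append {d m₁ m₂ : ℕ} (p : (Fin m₁ → Fin d) × (Fin m₂ → Fin d)) :
    Fin.append p.1 p.2 ∘ Fin.natAdd m₁ = p.2 := by
  funext i; simp [Fin.append_right]

lemma class_sum_pairs {d m₁ m₂ : ℕ} (F : (Fin m₁ → Fin d) → ℝ) (G : (Fin m₂ → Fin d) → ℝ)
    (α : Fin d →₀ ℕ) :
    ∑ w' ∈ univ.filter (fun w' : Fin (m₁ + m₂) → Fin d => expOf w' = α),
      F (w' ∘ Fin.castAdd m₂) * G (w' ∘ Fin.natAdd m₁)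
    = ∑ p ∈ univ.filter
        (fun p : (Fin m₁ → Fin d) × (Fin m₂ → Fin d) => expOf p.1 + expOf p.2 = α),
      F p.1 * G p.2 := by
  classical
  apply Finset.sum_nbij' (i := fun w' => (w' ∘ Fin.castAdd m₂, w' ∘ Fin.natAdd m₁))
    (j := fun p => Fin.append p.1 p.2)
  · intro w' hw'
    simp only [Finset.mem_filter, Finset.mem_univ, true_and] at hw' ⊢
    rw [expOf_split, hw']
  · intro p hp
    simp only [Finset.mem_filter, Finset.mem_univ, true_and] at hp ⊢
    rw [← expOf_split, comp_castAdd_append, comp_natAdd_append]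
    exact hp
  · intro w' _
    exact Fin.append_castAdd_natAdd (f := w')
  · intro p _
    rw [comp_castAdd_append, comp_natAdd_append]
  · intro w' _
    rfl

lemma avg_sq_le {d k : ℕ} (A : (Fin k → Fin d) → ℝ) (w : Fin k → Fin d) :
    ((∑ w' ∈ univ.filter (fun w' : Fin k → Fin d => expOf w' = expOf w), A w')
        / (countOf w : ℝ))^2
      ≤ (∑ w' ∈ univ.filter (fun w' : Fin k → Fin d => expOf w' = expOf w), (A w')^2)
        / (countOf w : ℝ) := by
  classical
  set s := univ.filter (fun w' : Fin k → Fin d => expOf w' = expOf w) with hs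
  have hN : (0:ℝ) < (countOf w : ℝ) := by exact_mod_cast countOf_pos w
  have hcard : (s.card : ℝ) = (countOf w : ℝ) := by
    rw [expOf_class_card w]
  have h1 : (∑ w' ∈ s, A w')^2 ≤ (countOf w : ℝ) * ∑ w' ∈ s, (A w')^2 := by
    have := sq_sum_le_card_mul_sum_sq (s := s) (f := A)
    rwa [hcard] at this
  rw [div_pow]
  calc (∑ w' ∈ s, A w')^2 / (countOf w : ℝ)^2
      ≤ ((countOf w : ℝ) * ∑ w' ∈ s, (A w')^2) / (countOf w : ℝ)^2 := by gcongr
    _ = (∑ w' ∈ s, (A w')^2) / (countOf w : ℝ) := by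
        rw [sq, mul_div_mul_left _ _ hN.ne']

lemma sum_avg {d k : ℕ} (B : (Fin k → Fin d) → ℝ) :
    ∑ w : Fin k → Fin d,
      (∑ w' ∈ univ.filter (fun w' : Fin k → Fin d => expOf w' = expOf w), B w')
        / (countOf w : ℝ)
    = ∑ w' : Fin k → Fin d, B w' := by
  classical
  have h1 : ∀ w : Fin k → Fin d,
      (∑ w' ∈ univ.filter (fun w' : Fin k → Fin d => expOf w' = expOf w), B w')
          / (countOf w : ℝ)
        = ∑ w' ∈ univ.filter (fun w' : Fin k → Fin d => expOf w' = expOf w),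
            B w' / (countOf w' : ℝ) := by
    intro w
    rw [Finset.sum_div]
    apply Finset.sum_congr rfl
    intro w' hw'
    rw [countOf_congr (Finset.mem_filter.mp hw').2]
  calc ∑ w : Fin k → Fin d,
        (∑ w' ∈ univ.filter (fun w' : Fin k → Fin d => expOf w' = expOf w), B w')
          / (countOf w : ℝ)
      = ∑ w : Fin k → Fin d, ∑ w' : Fin k → Fin d,
          if expOf w' = expOf w then B w' / (countOf w' : ℝ) else 0 := by
        apply Finset.sum_congr rfl
        intro w _
        rw [h1 w, Finset.sum_filter]
    _ = ∑ w' : Fin k → Fin d, ∑ w : Fin k → Fin d,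
          if expOf w' = expOf w then B w' / (countOf w' : ℝ) else 0 := Finset.sum_comm
    _ = ∑ w' : Fin k → Fin d, B w' := by
        apply Finset.sum_congr rfl
        intro w' _
        rw [← Finset.sum_filter, Finset.sum_const, nsmul_eq_mul]
        have hc : (univ.filter fun w : Fin k → Fin d => expOf w' = expOf w).card
            = countOf w' := by
          rw [expOf_class_card w']
          congr 1
          apply Finset.filter_congr
          intro x _
          simp [eq_comm]
        rw [hc]
        have hN : (countOf w' : ℝ) ≠ 0 := by
          exact_mod_cast (countOf_pos w').ne'
        field_simp

/-- For homogeneous polynomials `f, g` of degrees `m₁, m₂`: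
`‖v(fg)‖ ≤ ‖v(f)‖ · ‖v(g)‖`. -/
theorem vnorm_mul_le {d m₁ m₂ : ℕ} (f g : MvPolynomial (Fin d) ℝ)
    (hf : f.IsHomogeneous m₁) (hg : g.IsHomogeneous m₂) :
    vnorm (m₁ + m₂) (f * g) ≤ vnorm m₁ f * vnorm m₂ g := by
  classical
  set A : (Fin (m₁ + m₂) → Fin d) → ℝ := fun w' =>
    coeffVecEntry m₁ f (w' ∘ Fin.castAdd m₂) * coeffVecEntry m₂ g (w' ∘ Fin.natAdd m₁) with hA
  have hSf : (0:ℝ) ≤ ∑ u : Fin m₁ → Fin d, (coeffVecEntry m₁ f u)^2 := by positivity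
  rw [vnorm, vnorm, vnorm, ← Real.sqrt_mul hSf]
  apply Real.sqrt_le_sqrt
  have hentry : ∀ w : Fin (m₁ + m₂) → Fin d,
      coeffVecEntry (m₁ + m₂) (f * g) w =
        (∑ w' ∈ univ.filter (fun w' : Fin (m₁ + m₂) → Fin d => expOf w' = expOf w), A w')
          / (countOf w : ℝ) := by
    intro w
    rw [coeffVecEntry, ← coeff_mul_class hf hg (expOf w), ← class_sum_pairs]
  have hE : ∑ w' : Fin (m₁ + m₂) → Fin d, (A w')^2
      = (∑ u : Fin m₁ → Fin d, (coeffVecEntry m₁ f u)^2)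
        * (∑ v : Fin m₂ → Fin d, (coeffVecEntry m₂ g v)^2) := by
    let E : ((Fin m₁ → Fin d) × (Fin m₂ → Fin d)) ≃ (Fin (m₁ + m₂) → Fin d) :=
      ⟨fun p => Fin.append p.1 p.2,
       fun w => (w ∘ Fin.castAdd m₂, w ∘ Fin.natAdd m₁),
       fun p => by dsimp only; rw [comp_castAdd_append, comp_natAdd_append],
       fun w => Fin.append_castAdd_natAdd (f := w)⟩
    calc ∑ w' : Fin (m₁ + m₂) → Fin d, (A w')^2
        = ∑ p : (Fin m₁ → Fin d) × (Fin m₂ → Fin d),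
            (coeffVecEntry m₁ f p.1)^2 * (coeffVecEntry m₂ g p.2)^2 := by
          refine (Fintype.sum_equiv E _ _ ?_).symm
          intro p
          rw [hA]
          simp only [E, Equiv.coe_fn_mk, comp_castAdd_append, comp_natAdd_append]
          ring
      _ = ∑ u : Fin m₁ → Fin d, ∑ v : Fin m₂ → Fin d,
            (coeffVecEntry m₁ f u)^2 * (coeffVecEntry m₂ g v)^2 := Fintype.sum_prod_type _
      _ = _ := (Finset.sum_mul_sum _ _ _ _).symm
  calc ∑ w : Fin (m₁ + m₂) → Fin d, (coeffVecEntry (m₁ + m₂) (f * g) w)^2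
      ≤ ∑ w : Fin (m₁ + m₂) → Fin d,
          (∑ w' ∈ univ.filter (fun w' : Fin (m₁ + m₂) → Fin d => expOf w' = expOf w),
            (A w')^2) / (countOf w : ℝ) := by
        apply Finset.sum_le_sum
        intro w _
        rw [hentry w]
        exact avg_sq_le A w
    _ = ∑ w' : Fin (m₁ + m₂) → Fin d, (A w')^2 := sum_avg _
    _ = _ := hE
end

section
/- Let f: R^d → R be a function with sufficient decay (e.g., f(z)·e^{c‖z‖} integrable for all c). Define the adjusted characteristic function f̃(X) = ∫_{R^d} f(z)·exp(i z·X + (1/2)‖X‖²) dz. Then f̃(X) = Σ_{m=0}^∞ (i^m/m!)·h_{m,f}(X), where h_{m,f}(X) = ∫_{R^d} f(z)·H_m(X,z) dz are the Hermite moment polynomials of f. -/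
open MeasureTheory

/-- Homogenized probabilist's Hermite polynomials `𝓗_m(x, y²)` (second argument is `y²`). -/
noncomputable def hermite2 : ℕ → ℝ → ℝ → ℝ
  | 0, _, _ => 1
  | 1, x, _ => x
  | (m+2), x, y2 => x * hermite2 (m+1) x y2 - (m+1 : ℝ) * y2 * hermite2 m x y2

noncomputable def hC (m k : ℕ) : ℝ :=
  if 2*k ≤ m then (m.factorial : ℝ) / (k.factorial * (m-2*k).factorial * 2^k) else 0

lemma hC_nonneg (m k : ℕ) : 0 ≤ hC m k := by
  unfold hC; split
  · positivity
  · exact le_refl 0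

lemma hC_zero (m : ℕ) : hC m 0 = 1 := by
  have h : (m.factorial : ℝ) ≠ 0 := by positivity
  simp [hC, h]

lemma hC_eq_zero {m k : ℕ} (h : ¬ 2*k ≤ m) : hC m k = 0 := by
  simp [hC, h]

lemma hC_succ (m k : ℕ) : hC (m+2) (k+1) = hC (m+1) (k+1) + (m+1) * hC m k := by
  rcases le_or_gt (2*k+1) m with h1 | h1
  · obtain ⟨a, rfl⟩ : ∃ a, m = 2*k + 1 + a := ⟨m - (2*k+1), by omega⟩
    rw [hC, hC, hC, if_pos (by omega), if_pos (by omega), if_pos (by omega)]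
    have e1 : 2*k + 1 + a + 2 - 2*(k+1) = a + 1 := by omega
    have e2 : 2*k + 1 + a + 1 - 2*(k+1) = a := by omega
    have e3 : 2*k + 1 + a - 2*k = a + 1 := by omega
    rw [e1, e2, e3]
    rw [show 2*k+1+a+2 = (2*k+1+a+1)+1 by ring, Nat.factorial_succ (2*k+1+a+1),
      Nat.factorial_succ (2*k+1+a), Nat.factorial_succ a, Nat.factorial_succ k]
    have hk : (k.factorial : ℝ) ≠ 0 := by positivity
    have haf : (a.factorial : ℝ) ≠ 0 := by positivity
    have h2k : (2:ℝ)^k ≠ 0 := by positivity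
    push_cast
    field_simp
    ring
  · rcases le_or_gt (2*k) m with h0 | h0
    · have hm : m = 2*k := by omega
      subst hm
      rw [hC, hC, hC, if_pos (by omega), if_neg (by omega), if_pos (le_refl _)]
      have e1 : 2*k + 2 - 2*(k+1) = 0 := by omega
      have e2 : 2*k - 2*k = 0 := by omega
      rw [e1, e2]
      rw [show 2*k+2 = (2*k+1)+1 by ring, Nat.factorial_succ (2*k+1), Nat.factorial_succ (2*k),
        Nat.factorial_succ k]
      have hk : (k.factorial : ℝ) ≠ 0 := by positivity
      have h2k : (2:ℝ)^k ≠ 0 := by positivity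
      push_cast
      field_simp
      ring
    · rw [hC_eq_zero (show ¬ 2*(k+1) ≤ m+2 by omega), hC_eq_zero (show ¬ 2*(k+1) ≤ m+1 by omega),
        hC_eq_zero (show ¬ 2*k ≤ m by omega)]
      ring

lemma hermite2_eq_sum : ∀ (m : ℕ) (x y2 : ℝ),
    hermite2 m x y2 = ∑ k ∈ Finset.range (m+1), (-1:ℝ)^k * hC m k * x^(m-2*k) * y2^k := by
  have main : ∀ m : ℕ, (∀ x y2 : ℝ,
      hermite2 m x y2 = ∑ k ∈ Finset.range (m+1), (-1:ℝ)^k * hC m k * x^(m-2*k) * y2^k) ∧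
      (∀ x y2 : ℝ,
      hermite2 (m+1) x y2 = ∑ k ∈ Finset.range (m+2), (-1:ℝ)^k * hC (m+1) k * x^(m+1-2*k) * y2^k) := by
    intro m
    induction m with
    | zero =>
      constructor
      · intro x y2
        simp [hermite2, hC_zero]
      · intro x y2
        rw [show hermite2 1 x y2 = x from rfl]
        rw [Finset.sum_range_succ, Finset.sum_range_one]
        rw [hC_zero, hC_eq_zero (show ¬ 2*1 ≤ 1 by omega)]
        norm_num
    | succ m ih =>
      obtain ⟨ih0, ih1⟩ := ih
      refine ⟨ih1, fun x y2 => ?_⟩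
      rw [show hermite2 (m+2) x y2
          = x * hermite2 (m+1) x y2 - (m+1:ℝ) * y2 * hermite2 m x y2 from rfl, ih0, ih1]
      -- extend the `m` sum by one zero term
      have ext0 : ∑ k ∈ Finset.range (m+1), (-1:ℝ)^k * hC m k * x^(m-2*k) * y2^k
          = ∑ k ∈ Finset.range (m+2), (-1:ℝ)^k * hC m k * x^(m-2*k) * y2^k := by
        conv_rhs => rw [Finset.sum_range_succ]
        rw [hC_eq_zero (show ¬ 2*(m+1) ≤ m by omega)]
        ring
      rw [ext0]
      rw [Finset.sum_range_succ' (fun k => (-1:ℝ)^k * hC (m+2) k * x^(m+2-2*k) * y2^k) (m+2)]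
      rw [Finset.sum_range_succ' (fun k => (-1:ℝ)^k * hC (m+1) k * x^(m+1-2*k) * y2^k) (m+1)]
      -- extend the shifted (m+1) sum by one zero term
      have ext1 : ∑ k ∈ Finset.range (m+1),
            (-1:ℝ)^(k+1) * hC (m+1) (k+1) * x^(m+1-2*(k+1)) * y2^(k+1)
          = ∑ k ∈ Finset.range (m+2),
            (-1:ℝ)^(k+1) * hC (m+1) (k+1) * x^(m+1-2*(k+1)) * y2^(k+1) := by
        conv_rhs => rw [Finset.sum_range_succ]
        rw [hC_eq_zero (show ¬ 2*(m+1+1) ≤ m+1 by omega)]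
        ring
      rw [ext1, mul_add, Finset.mul_sum]
      have hzero : x * ((-1:ℝ)^0 * hC (m+1) 0 * x^(m+1-2*0) * y2^0)
          = (-1:ℝ)^0 * hC (m+2) 0 * x^(m+2-2*0) * y2^0 := by
        rw [hC_zero, hC_zero]
        simp [pow_succ]
        ring
      rw [hzero, add_sub_right_comm]
      congr 1
      rw [Finset.mul_sum, ← Finset.sum_sub_distrib]
      apply Finset.sum_congr rfl
      intro k hk
      rw [hC_succ]
      rcases le_or_gt (2*(k+1)) (m+1) with h | h
      · have e : m+2-2*(k+1) = (m+1-2*(k+1)) + 1 := by omega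
        have e2 : m - 2*k = m+2-2*(k+1) := by omega
        rw [← e2] at e ⊢
        rw [e, pow_succ]
        ring
      · rcases le_or_gt (2*k) m with h0 | h0
        · have hm : m = 2*k := by omega
          subst hm
          rw [hC_eq_zero (show ¬ 2*(k+1) ≤ 2*k+1 by omega)]
          simp only [show 2*k+2-2*(k+1) = 0 from by omega, show 2*k-2*k = 0 from by omega,
            show 2*k+1-2*(k+1) = 0 from by omega, pow_zero]
          ring
        · rw [hC_eq_zero (show ¬ 2*(k+1) ≤ m+1 by omega), hC_eq_zero (show ¬ 2*k ≤ m by omega)]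
          ring
  exact fun m => (main m).1

lemma hasSum_fiber {𝕜 : Type*} [NormedField 𝕜] [CompleteSpace 𝕜] {u v : ℕ → 𝕜} {A B : 𝕜}
    (hu : Summable fun n => ‖u n‖) (hv : Summable fun n => ‖v n‖)
    (hA : HasSum u A) (hB : HasSum v B) :
    HasSum (fun m => ∑ k ∈ Finset.range (m+1),
      if 2*k ≤ m then u (m-2*k) * v k else 0) (A*B) := by
  have hprod : Summable (fun p : ℕ×ℕ => u p.1 * v p.2) := summable_mul_of_summable_norm hu hv
  have hF : HasSum (fun p : ℕ×ℕ => u p.1 * v p.2) (A*B) := hA.mul hB hprod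
  set e : ℕ×ℕ → ℕ×ℕ := fun p => (p.1 + 2*p.2, p.2) with he
  have hinj : Function.Injective e := by
    intro a b h
    simp only [he, Prod.mk.injEq] at h
    obtain ⟨h1, h2⟩ := h
    exact Prod.ext (by omega) h2
  set G : ℕ×ℕ → 𝕜 := fun p => if 2*p.2 ≤ p.1 then u (p.1-2*p.2) * v p.2 else 0 with hGdef
  have hcomp : (fun p : ℕ×ℕ => u p.1 * v p.2) = G ∘ e := by
    funext p
    simp only [hGdef, he, Function.comp_apply]
    rw [if_pos (by omega)]
    congr 1
    congr 1
    omega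
  have hGrange : ∀ p ∉ Set.range e, G p = 0 := by
    intro p hp
    rw [hGdef]
    by_cases h : 2*p.2 ≤ p.1
    · exact absurd ⟨(p.1 - 2*p.2, p.2), Prod.ext (by simp [he]; omega) rfl⟩ hp
    · simp [h]
  have hG : HasSum G (A*B) := (hinj.hasSum_iff hGrange).mp (by rw [← hcomp]; exact hF)
  refine HasSum.prod_fiberwise hG (fun m => ?_)
  exact hasSum_sum_of_ne_finset_zero (by
    intro k hk
    have hk' : ¬ 2*k ≤ m := by simp only [Finset.mem_range] at hk; omega
    simp [hGdef, hk'])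

lemma hasSum_hermite2_complex (x y2 : ℝ) :
    HasSum (fun m => Complex.I^m / (m.factorial : ℂ) * (hermite2 m x y2 : ℂ))
      (Complex.exp (Complex.I * x + y2/2)) := by
  have hu : HasSum (fun j => (Complex.I*x)^j / (j.factorial : ℂ)) (Complex.exp (Complex.I*x)) := by
    rw [Complex.exp_eq_exp_ℂ]; exact NormedSpace.expSeries_div_hasSum_exp _
  have hv : HasSum (fun k => ((y2:ℂ)/2)^k / (k.factorial : ℂ)) (Complex.exp ((y2:ℂ)/2)) := by
    rw [Complex.exp_eq_exp_ℂ]; exact NormedSpace.expSeries_div_hasSum_exp _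
  have hun : Summable fun j => ‖(Complex.I*x)^j / (j.factorial : ℂ)‖ := by
    simpa [norm_div, norm_pow, Complex.norm_natCast] using
      Real.summable_pow_div_factorial ‖Complex.I*(x:ℂ)‖
  have hvn : Summable fun k => ‖((y2:ℂ)/2)^k / (k.factorial : ℂ)‖ := by
    simpa [norm_div, norm_pow, Complex.norm_natCast] using
      Real.summable_pow_div_factorial ‖(y2:ℂ)/2‖
  have key := hasSum_fiber hun hvn hu hv
  rw [Complex.exp_add]
  refine key.congr_fun (fun m => ?_)
  rw [hermite2_eq_sum]
  push_cast
  rw [Finset.mul_sum]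
  refine Finset.sum_congr rfl (fun k hk => ?_)
  by_cases h : 2*k ≤ m
  · rw [if_pos h]
    have hIm : Complex.I^m = Complex.I^(m-2*k) * ((-1:ℂ))^k := by
      rw [show ((-1:ℂ))^k = (Complex.I^2)^k by rw [Complex.I_sq], ← pow_mul, ← pow_add]
      congr 1
      omega
    rw [hC, if_pos h, mul_pow, hIm]
    have h1 : ((m.factorial : ℝ) : ℂ) = (m.factorial : ℂ) := by push_cast; rfl
    push_cast
    have hmf : ((m.factorial : ℕ) : ℂ) ≠ 0 := Nat.cast_ne_zero.mpr (Nat.factorial_ne_zero m)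
    have hkf : ((k.factorial : ℕ) : ℂ) ≠ 0 := Nat.cast_ne_zero.mpr (Nat.factorial_ne_zero k)
    have hjf : (((m-2*k).factorial : ℕ) : ℂ) ≠ 0 :=
      Nat.cast_ne_zero.mpr (Nat.factorial_ne_zero _)
    have h2 : (2:ℂ)^k ≠ 0 := by norm_num
    field_simp
    ring_nf
    rw [show ((-1:ℂ))^(k*2) = 1 from by rw [mul_comm, pow_mul, neg_one_sq, one_pow]]
    have hhalf : ((1:ℂ)/2)^k * 2^k = 1 := by rw [← mul_pow]; norm_num
    linear_combination (-((x:ℂ) ^ (m - k * 2) * (y2:ℂ) ^ k)) * hhalf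
  · rw [if_neg h, hC_eq_zero h]
    push_cast
    ring

set_option maxHeartbeats 1000000 in
lemma hasSum_D (x y2 : ℝ) :
    HasSum (fun m => ∑ k ∈ Finset.range (m+1),
      if 2*k ≤ m then |x|^(m-2*k)/((m-2*k).factorial : ℝ) * ((y2/2)^k/(k.factorial : ℝ)) else 0)
      (Real.exp |x| * Real.exp (y2/2)) := by
  have hu : HasSum (fun j => |x|^j / (j.factorial : ℝ)) (Real.exp |x|) := by
    have := NormedSpace.expSeries_div_hasSum_exp |x|
    rwa [← Real.exp_eq_exp_ℝ] at this
  have hv : HasSum (fun k => (y2/2)^k / (k.factorial : ℝ)) (Real.exp (y2/2)) := by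
    have := NormedSpace.expSeries_div_hasSum_exp (y2/2)
    rwa [← Real.exp_eq_exp_ℝ] at this
  have hun : Summable fun j => ‖|x|^j / (j.factorial : ℝ)‖ := by
    simpa [norm_div, norm_pow, Real.norm_natCast] using Real.summable_pow_div_factorial ‖|x|‖
  have hvn : Summable fun k => ‖(y2/2)^k / (k.factorial : ℝ)‖ := by
    simpa [norm_div, norm_pow, Real.norm_natCast] using Real.summable_pow_div_factorial ‖y2/2‖
  exact hasSum_fiber (u := fun j => |x|^j / (j.factorial : ℝ)) (v := fun k => (y2/2)^k / (k.factorial : ℝ)) hun hvn hu hv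

lemma abs_hermite2_le (m : ℕ) (x y2 : ℝ) (hy2 : 0 ≤ y2) :
    |hermite2 m x y2| ≤ (m.factorial : ℝ) * ∑ k ∈ Finset.range (m+1),
      (if 2*k ≤ m then |x|^(m-2*k)/((m-2*k).factorial : ℝ) * ((y2/2)^k/(k.factorial : ℝ)) else 0) := by
  rw [hermite2_eq_sum, Finset.mul_sum]
  refine (Finset.abs_sum_le_sum_abs _ _).trans (Finset.sum_le_sum ?_)
  intro k _
  by_cases h : 2*k ≤ m
  · rw [if_pos h]
    rw [abs_mul, abs_mul, abs_mul, abs_pow, abs_pow, abs_pow, abs_neg, abs_one, one_pow, one_mul,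
      abs_of_nonneg (hC_nonneg m k), abs_of_nonneg hy2, hC, if_pos h]
    have hmf : ((m-2*k).factorial : ℝ) ≠ 0 := Nat.cast_ne_zero.mpr (Nat.factorial_ne_zero _)
    have hkf : ((k.factorial : ℝ)) ≠ 0 := Nat.cast_ne_zero.mpr (Nat.factorial_ne_zero _)
    apply le_of_eq
    field_simp
    have hhalf : ((1:ℝ)/2)^k * 2^k = 1 := by rw [← mul_pow]; norm_num
    linear_combination (-(|x| ^ (m - 2 * k) * y2 ^ k)) * hhalf
  · rw [if_neg h, hC_eq_zero h]
    simp

/-- For a function `f : ℝ^d → ℝ` with sufficient decay, the adjusted characteristic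
function `f̃(X) = ∫ f(z)·e^{i z·X + ‖X‖²/2} dz` equals
`Σ_m (i^m/m!)·h_{m,f}(X)` where `h_{m,f}(X) = ∫ f(z)·H_m(X,z) dz` and
`H_m(X,z) = 𝓗_m(z·X, ‖X‖²)`. -/
theorem adjusted_char_function_series {d : ℕ} (f : (Fin d → ℝ) → ℝ)
    (hdecay : ∀ c : ℝ, Integrable (fun z : Fin d → ℝ => f z * Real.exp (c * ‖z‖)))
    (X : Fin d → ℝ) :
    (∫ z : Fin d → ℝ, (f z : ℂ) *
        Complex.exp (Complex.I * (dotProduct z X : ℝ)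
          + (dotProduct X X : ℝ)/2))
      = ∑' m : ℕ, (Complex.I^m / (Nat.factorial m)) *
          ((∫ z : Fin d → ℝ,
            f z * hermite2 m (dotProduct z X) (dotProduct X X) : ℝ) : ℂ) := by
  set y2 : ℝ := dotProduct X X with hy2def
  have hy2 : 0 ≤ y2 := Finset.sum_nonneg fun i _ => mul_self_nonneg _
  set c : ℝ := ∑ i, |X i| with hcdef
  have hxz : ∀ z : Fin d → ℝ, |dotProduct z X| ≤ c * ‖z‖ := by
    intro z
    calc |dotProduct z X| ≤ ∑ i, |z i * X i| := Finset.abs_sum_le_sum_abs _ _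
      _ ≤ ∑ i, ‖z‖ * |X i| := by
          refine Finset.sum_le_sum fun i _ => ?_
          rw [abs_mul]
          exact mul_le_mul_of_nonneg_right (norm_le_pi_norm z i) (abs_nonneg _)
      _ = c * ‖z‖ := by rw [← Finset.mul_sum, mul_comm]
  -- measurability of f
  have hfm : AEStronglyMeasurable f volume := by
    have h0 := (hdecay 0).aestronglyMeasurable
    simpa using h0
  -- dominating function
  have hg : Integrable (fun z : Fin d → ℝ => |f z| * Real.exp (c * ‖z‖)) := by
    refine ((hdecay c).abs).congr (Filter.Eventually.of_forall fun z => ?_)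
    simp [abs_mul, Real.abs_exp]
  have hgK : Integrable (fun z : Fin d → ℝ => |f z| * Real.exp (c * ‖z‖) * Real.exp (y2/2)) :=
    hg.mul_const _
  -- continuity of hermite2 in z
  have hcont : ∀ m : ℕ, Continuous fun z : Fin d → ℝ => hermite2 m (dotProduct z X) y2 := by
    intro m
    have hdot : Continuous fun z : Fin d → ℝ => dotProduct z X :=
      continuous_finset_sum _ fun i _ => (continuous_apply i).mul continuous_const
    simp only [hermite2_eq_sum]
    exact continuous_finset_sum _ fun k _ =>
      (continuous_const.mul (hdot.pow _)).mul continuous_const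
  set F : ℕ → (Fin d → ℝ) → ℂ := fun m z =>
    (Complex.I^m / (Nat.factorial m : ℂ)) *
      ((f z * hermite2 m (dotProduct z X) y2 : ℝ) : ℂ) with hFdef
  set D : ℕ → (Fin d → ℝ) → ℝ := fun m z => ∑ k ∈ Finset.range (m+1),
    if 2*k ≤ m then |dotProduct z X|^(m-2*k)/((m-2*k).factorial : ℝ) *
      ((y2/2)^k/(k.factorial : ℝ)) else 0 with hDdef
  have hDnonneg : ∀ m z, 0 ≤ D m z := by
    intro m z
    refine Finset.sum_nonneg fun k _ => ?_
    split
    · positivity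
    · exact le_refl 0
  have hnormF : ∀ m z, ‖F m z‖ ≤ |f z| * D m z := by
    intro m z
    rw [hFdef]
    simp only [norm_mul, norm_div, norm_pow, Complex.norm_I, one_pow, Complex.norm_real,
      Complex.norm_natCast]
    have hfac : (0:ℝ) < (Nat.factorial m : ℝ) := by positivity
    have habs : |hermite2 m (dotProduct z X) y2| ≤ (Nat.factorial m : ℝ) * D m z := by
      rw [hDdef]
      exact abs_hermite2_le m _ _ hy2
    rw [Real.norm_eq_abs, div_mul_eq_mul_div, one_mul, div_le_iff₀ hfac]
    calc |f z| * |hermite2 m (dotProduct z X) y2|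
        ≤ |f z| * ((Nat.factorial m : ℝ) * D m z) :=
          mul_le_mul_of_nonneg_left habs (abs_nonneg _)
      _ = |f z| * D m z * (Nat.factorial m : ℝ) := by ring
  have hDle : ∀ m z, D m z ≤ Real.exp (c * ‖z‖) * Real.exp (y2/2) := by
    intro m z
    have h1 : D m z ≤ Real.exp |dotProduct z X| * Real.exp (y2/2) :=
      le_hasSum (hasSum_D (dotProduct z X) y2) m (fun m' _ => hDnonneg m' z)
    refine h1.trans ?_
    exact mul_le_mul_of_nonneg_right (Real.exp_le_exp.mpr (hxz z)) (Real.exp_nonneg _)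
  have hFbound : ∀ m z, ‖F m z‖ ≤ |f z| * Real.exp (c * ‖z‖) * Real.exp (y2/2) := by
    intro m z
    refine (hnormF m z).trans ?_
    rw [mul_assoc]
    exact mul_le_mul_of_nonneg_left (hDle m z) (abs_nonneg _)
  have hFi : ∀ m, Integrable (F m) := by
    intro m
    refine Integrable.mono hgK ?_ (Filter.Eventually.of_forall fun z => ?_)
    · exact (Complex.continuous_ofReal.comp_aestronglyMeasurable
        (hfm.mul (hcont m).aestronglyMeasurable)).const_mul _
    · exact (hFbound m z).trans (le_abs_self _)
  have hsum : Summable fun m => ∫ z, ‖F m z‖ := by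
    refine summable_of_sum_range_le (c := ∫ z, |f z| * Real.exp (c * ‖z‖) * Real.exp (y2/2))
      (fun m => integral_nonneg fun z => norm_nonneg _) (fun n => ?_)
    rw [← integral_finset_sum _ (fun m _ => (hFi m).norm)]
    refine integral_mono (integrable_finset_sum _ fun m _ => (hFi m).norm) hgK fun z => ?_
    calc ∑ m ∈ Finset.range n, ‖F m z‖
        ≤ ∑ m ∈ Finset.range n, |f z| * D m z := Finset.sum_le_sum fun m _ => hnormF m z
      _ = |f z| * ∑ m ∈ Finset.range n, D m z := by rw [Finset.mul_sum]
      _ ≤ |f z| * (Real.exp |dotProduct z X| * Real.exp (y2/2)) := by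
          refine mul_le_mul_of_nonneg_left ?_ (abs_nonneg _)
          exact sum_le_hasSum (Finset.range n) (fun m _ => hDnonneg m z)
            (hasSum_D (dotProduct z X) y2)
      _ ≤ |f z| * Real.exp (c * ‖z‖) * Real.exp (y2/2) := by
          rw [mul_assoc]
          refine mul_le_mul_of_nonneg_left ?_ (abs_nonneg _)
          exact mul_le_mul_of_nonneg_right
            (Real.exp_le_exp.mpr (hxz z)) (Real.exp_nonneg _)
  have hpt : ∀ z : Fin d → ℝ, (f z : ℂ) *
      Complex.exp (Complex.I * (dotProduct z X : ℝ) + (y2 : ℝ)/2)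
      = ∑' m, F m z := by
    intro z
    rw [← ((hasSum_hermite2_complex (dotProduct z X) y2).mul_left (f z : ℂ)).tsum_eq]
    refine tsum_congr fun m => ?_
    rw [hFdef]
    push_cast
    ring
  calc (∫ z : Fin d → ℝ, (f z : ℂ) *
        Complex.exp (Complex.I * (dotProduct z X : ℝ) + (y2 : ℝ)/2))
      = ∫ z : Fin d → ℝ, ∑' m, F m z := by
        exact integral_congr_ae (Filter.Eventually.of_forall hpt)
    _ = ∑' m, ∫ z : Fin d → ℝ, F m z :=
        (integral_tsum_of_summable_integral_norm hFi hsum).symm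
    _ = ∑' m : ℕ, (Complex.I^m / (Nat.factorial m)) *
          ((∫ z : Fin d → ℝ,
            f z * hermite2 m (dotProduct z X) y2 : ℝ) : ℂ) := by
        refine tsum_congr fun m => ?_
        rw [hFdef]
        rw [MeasureTheory.integral_const_mul]
        congr 1
        exact integral_ofReal
end

section
/- For every real number t and every nonnegative integer m, ∫_{-∞}^{∞} x^m · e^{-x²/2} · e^{-itx} dx = (-i)^m · √(2π) · e^{-t²/2} · 𝓗_m(t), where 𝓗_m is the m-th probabilist's Hermite polynomial. -/
open MeasureTheory Complex

lemma hermite_ft_integrable_aux (t : ℝ) (n : ℕ) :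
    Integrable fun x : ℝ =>
      (x:ℂ)^n * Complex.exp (-(x:ℂ)^2/2) * Complex.exp (-Complex.I * t * x) := by
  have h0 : Integrable fun x : ℝ => x ^ (n:ℝ) * Real.exp (-(2⁻¹) * x ^ 2) :=
    integrable_rpow_mul_exp_neg_mul_sq (by norm_num)
      (by exact_mod_cast neg_one_lt_zero.trans_le (by positivity))
  refine h0.norm.mono' ?_ ?_
  · apply Continuous.aestronglyMeasurable
    fun_prop
  · filter_upwards with x
    rw [Real.rpow_natCast]
    have hA : (-(x:ℂ)^2/2) = ((-(2⁻¹) * x^2 : ℝ) : ℂ) := by push_cast; ring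
    have hB : (-Complex.I * t * x) = ((t*x : ℝ) : ℂ) * (-Complex.I) := by push_cast; ring
    have : ‖(x:ℂ)^n * Complex.exp (-(x:ℂ)^2/2) * Complex.exp (-Complex.I * t * x)‖
        = |x|^n * Real.exp (-(2⁻¹) * x^2) := by
      rw [norm_mul, norm_mul, norm_pow, Complex.norm_real, hA, hB]
      simp [Complex.norm_exp, Real.norm_eq_abs, ← Complex.ofReal_pow]
    rw [this, Real.norm_eq_abs, abs_mul, _root_.abs_pow, abs_of_pos (Real.exp_pos _)]

lemma hermite_ft_parts_aux (t : ℝ) (n : ℕ) :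
    (∫ x : ℝ, (x:ℂ)^(n+1) * Complex.exp (-(x:ℂ)^2/2) * Complex.exp (-Complex.I*t*x))
      = n * (∫ x : ℝ, (x:ℂ)^(n-1) * Complex.exp (-(x:ℂ)^2/2) * Complex.exp (-Complex.I*t*x))
        - Complex.I * t *
          ∫ x : ℝ, (x:ℂ)^n * Complex.exp (-(x:ℂ)^2/2) * Complex.exp (-Complex.I*t*x) := by
  set u : ℝ → ℂ := fun x => (x:ℂ)^n * Complex.exp (-Complex.I*t*x) with hu_def
  set u' : ℝ → ℂ := fun x =>
    ((n:ℂ) * (x:ℂ)^(n-1) + (x:ℂ)^n * (-Complex.I*t)) * Complex.exp (-Complex.I*t*x) with hu'_def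
  set v : ℝ → ℂ := fun x => -Complex.exp (-(x:ℂ)^2/2) with hv_def
  set v' : ℝ → ℂ := fun x => (x:ℂ) * Complex.exp (-(x:ℂ)^2/2) with hv'_def
  have hu : ∀ x : ℝ, HasDerivAt u (u' x) x := by
    intro x
    have h1 : HasDerivAt (fun z : ℂ => z^n * Complex.exp (-Complex.I*t*z))
        ((n:ℂ) * (x:ℂ)^(n-1) * Complex.exp (-Complex.I*t*x)
          + (x:ℂ)^n * (Complex.exp (-Complex.I*t*x) * (-Complex.I*t))) (x:ℂ) := by
      exact (hasDerivAt_pow n _).mul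
        (((hasDerivAt_id (x:ℂ)).const_mul (-Complex.I*(t:ℂ))).cexp.congr_deriv (by simp))
    have := h1.comp_ofReal
    simpa [u, u', mul_comm, mul_assoc, mul_add, add_mul] using this.congr_deriv (by ring)
  have hv : ∀ x : ℝ, HasDerivAt v (v' x) x := by
    intro x
    have h1 : HasDerivAt (fun z : ℂ => -Complex.exp (-z^2/2))
        ((x:ℂ) * Complex.exp (-(x:ℂ)^2/2)) (x:ℂ) := by
      have h2 : HasDerivAt (fun z : ℂ => -z^2/2) (-(x:ℂ)) (x:ℂ) := by
        simpa using (((hasDerivAt_pow 2 (x:ℂ)).neg).div_const 2).congr_deriv (by ring)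
      exact (h2.cexp.neg).congr_deriv (by ring)
    exact h1.comp_ofReal
  have e1 : ∀ x : ℝ, u x * v' x
      = (x:ℂ)^(n+1) * Complex.exp (-(x:ℂ)^2/2) * Complex.exp (-Complex.I*t*x) := by
    intro x; simp only [u, v']; ring
  have e2 : ∀ x : ℝ, u' x * v x
      = (-(n:ℂ)) * ((x:ℂ)^(n-1) * Complex.exp (-(x:ℂ)^2/2) * Complex.exp (-Complex.I*t*x))
        + (Complex.I*t) * ((x:ℂ)^n * Complex.exp (-(x:ℂ)^2/2) * Complex.exp (-Complex.I*t*x)) := by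
    intro x; simp only [u', v]; ring
  have e3 : ∀ x : ℝ, u x * v x
      = -((x:ℂ)^n * Complex.exp (-(x:ℂ)^2/2) * Complex.exp (-Complex.I*t*x)) := by
    intro x; simp only [u, v]; ring
  have huv' : Integrable (u * v') :=
    (hermite_ft_integrable_aux t (n+1)).congr (Filter.Eventually.of_forall fun x => (e1 x).symm)
  have hu'v : Integrable (u' * v) :=
    (((hermite_ft_integrable_aux t (n-1)).const_mul _).add
      ((hermite_ft_integrable_aux t n).const_mul _)).congr
        (Filter.Eventually.of_forall fun x => (e2 x).symm)
  have huv : Integrable (u * v) :=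
    ((hermite_ft_integrable_aux t n).neg).congr (Filter.Eventually.of_forall fun x => (e3 x).symm)
  have key := integral_mul_deriv_eq_deriv_mul_of_integrable (fun x _ => hu x) (fun x _ => hv x) huv' hu'v huv
  simp only [e1, e2, e3] at key
  rw [integral_add ((hermite_ft_integrable_aux t (n-1)).const_mul _)
      ((hermite_ft_integrable_aux t n).const_mul _),
    integral_const_mul, integral_const_mul] at key
  rw [key]; ring

lemma hermite_ft_base_aux (t : ℝ) :
    ∫ x : ℝ, Complex.exp (-(x:ℂ)^2/2) * Complex.exp (-Complex.I*t*x)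
      = Real.sqrt (2 * Real.pi) * Complex.exp (-(t:ℂ)^2/2) := by
  have h := fourierIntegral_gaussian (b := (1/2:ℂ)) (by norm_num) (-(t:ℂ))
  have e1 : ∀ x : ℝ, Complex.exp (Complex.I * (-(t:ℂ)) * x) * Complex.exp (-(1/2:ℂ) * x^2)
      = Complex.exp (-(x:ℂ)^2/2) * Complex.exp (-Complex.I*t*x) := by
    intro x
    rw [show Complex.I * (-(t:ℂ)) * x = -Complex.I*t*x by ring,
      show (-(1/2:ℂ)) * (x:ℂ)^2 = -(x:ℂ)^2/2 by ring]
    ring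
  simp only [e1] at h
  rw [h, show (↑Real.pi / (1/2:ℂ)) = ((2 * Real.pi : ℝ) : ℂ) by push_cast; ring,
    show ((1:ℂ)/2) = (((1:ℝ)/2 : ℝ) : ℂ) by norm_num,
    ← Complex.ofReal_cpow (by positivity), ← Real.sqrt_eq_rpow]
  congr 1
  push_cast
  ring

/-- Probabilist's Hermite polynomials: `𝓗₀ = 1`, `𝓗₁(t) = t`,
`𝓗_m(t) = t·𝓗_{m-1}(t) − (m−1)·𝓗_{m-2}(t)`. -/
noncomputable def hermite1 : ℕ → ℝ → ℝ
  | 0, _ => 1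
  | 1, t => t
  | (m+2), t => t * hermite1 (m+1) t - (m+1 : ℝ) * hermite1 m t

/-- `∫ x^m e^{−x²/2} e^{−itx} dx = (−i)^m √(2π) e^{−t²/2} 𝓗_m(t)`. -/
theorem hermite_fourier_transform (t : ℝ) (m : ℕ) :
    ∫ x : ℝ, (x : ℂ)^m * Complex.exp (-(x:ℂ)^2/2) * Complex.exp (-Complex.I * t * x) =
      (-Complex.I)^m * Real.sqrt (2 * Real.pi) * Complex.exp (-(t:ℂ)^2/2) *
        (hermite1 m t : ℂ) := by
  induction m using Nat.twoStepInduction with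
  | zero =>
    simpa [hermite1] using hermite_ft_base_aux t
  | one =>
    have h := hermite_ft_parts_aux t 0
    simp only [zero_add, Nat.zero_sub, Nat.cast_zero, zero_mul, zero_sub, pow_zero, one_mul] at h
    rw [h, hermite_ft_base_aux t]
    simp [hermite1]
    ring
  | more n ih0 ih1 =>
    have h := hermite_ft_parts_aux t (n+1)
    simp only [Nat.add_sub_cancel] at h
    rw [h, ih0, ih1]
    have : (hermite1 (n+2) t : ℂ)
        = t * (hermite1 (n+1) t : ℂ) - ((n:ℂ)+1) * (hermite1 n t : ℂ) := by
      rw [show hermite1 (n+2) t = t * hermite1 (n+1) t - (n+1 : ℝ) * hermite1 n t from rfl]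
      push_cast
      ring
    rw [this]
    push_cast
    ring_nf
    simp only [Complex.I_sq]
    ring_nf
end
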